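/- A word w is rejected by an NBW A if and only if the reduced split tree of A on w has a cutoff: a level i such that for every level j ≥ i, every accepting-state node (left child) at level j lies on a finite branch of the tree. -/

import Mathlib

/-- A nondeterministic Büchi automaton. -/
structure NBW (A Q : Type*) where
  init : Q
  trans : Q → A → Set Q
  acc : Set Q

def NBW.IsRun {A Q : Type*} (M : NBW A Q) (w : ℕ → A) (ρ : ℕ → Q) : Prop :=
  ρ 0 = M.init ∧ ∀ i, ρ (i + 1) ∈ M.trans (ρ i) (w i)

def NBW.Accepting {A Q : Type*} (M : NBW A Q) (ρ : ℕ → Q) : Prop :=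
  ∃ q ∈ M.acc, ∀ N, ∃ i ≥ N, ρ i = q

def NBW.Lang {A Q : Type*} (M : NBW A Q) : Set (ℕ → A) :=
  {w | ∃ ρ, M.IsRun w ρ ∧ M.Accepting ρ}

/-- One level of the reduced split tree, with parents: for each node `Qi` of the
slice (processed left to right, `seen` collecting states already placed to the
left), record the triple (parent, left (accepting) child, right (nonaccepting)
child), before deletion of empty nodes. -/
def expandTriples {A Q : Type*} (δ : Q → A → Set Q) (F : Set Q) (a : A) :
    List (Set Q) → Set Q → List (Set Q × Set Q × Set Q)
  | [], _ => []
  | Qi :: rest, seen =>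
    (Qi, (((⋃ q ∈ Qi, δ q a) ∩ F) \ seen), ((⋃ q ∈ Qi, δ q a) \ F) \ seen) ::
      expandTriples δ F a rest
        (seen ∪ ((((⋃ q ∈ Qi, δ q a) ∩ F) \ seen)) ∪ (((⋃ q ∈ Qi, δ q a) \ F) \ seen))

/-- The successor slice: children of all nodes, with empty nodes removed. -/
noncomputable def sliceSucc {A Q : Type*} (δ : Q → A → Set Q) (F : Set Q) (a : A)
    (s : List (Set Q)) : List (Set Q) :=
  ((expandTriples δ F a s ∅).flatMap fun tr => [tr.2.1, tr.2.2]).filter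
    fun S => @decide S.Nonempty (Classical.propDecidable _)

/-- The slices (levels) of the reduced split tree of `M` on `w`. -/
noncomputable def rstSlice {A Q : Type*} (M : NBW A Q) (w : ℕ → A) : ℕ → List (Set Q)
  | 0 => [{M.init}]
  | n + 1 => sliceSucc M.trans M.acc (w n) (rstSlice M w n)

/-- `T` is the left (accepting) child of the node `S` of slice `s` on symbol `a`. -/
def LeftChild {A Q : Type*} (δ : Q → A → Set Q) (F : Set Q) (a : A)
    (s : List (Set Q)) (S T : Set Q) : Prop :=
  ∃ tr ∈ expandTriples δ F a s ∅, tr.1 = S ∧ tr.2.1 = T ∧ T.Nonempty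

/-- `T` is the right (nonaccepting) child of the node `S` of slice `s` on `a`. -/
def RightChild {A Q : Type*} (δ : Q → A → Set Q) (F : Set Q) (a : A)
    (s : List (Set Q)) (S T : Set Q) : Prop :=
  ∃ tr ∈ expandTriples δ F a s ∅, tr.1 = S ∧ tr.2.2 = T ∧ T.Nonempty

/-- `T` is a child of `S`. -/
def Child {A Q : Type*} (δ : Q → A → Set Q) (F : Set Q) (a : A)
    (s : List (Set Q)) (S T : Set Q) : Prop :=
  LeftChild δ F a s S T ∨ RightChild δ F a s S T

open Classical in
/-- which component of a triple: `false` = left (accepting), `true` = right. -/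
def trcomp {Q : Type*} (b : Bool) (tr : Set Q × Set Q × Set Q) : Set Q :=
  bif b then tr.2.2 else tr.2.1

section ET
variable {A Q : Type*} {δ : Q → A → Set Q} {F : Set Q} {a : A}

lemma ET_shape {s : List (Set Q)} {seen : Set Q} {tr : Set Q × Set Q × Set Q}
    (h : tr ∈ expandTriples δ F a s seen) :
    ∃ P seen', P ∈ s ∧ seen ⊆ seen' ∧
      tr = (P, ((⋃ q ∈ P, δ q a) ∩ F) \ seen', ((⋃ q ∈ P, δ q a) \ F) \ seen') := by
  induction s generalizing seen with
  | nil => simp [expandTriples] at h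
  | cons Qi rest ih =>
    rw [expandTriples] at h
    rcases List.mem_cons.1 h with h | h
    · exact ⟨Qi, seen, by simp, subset_rfl, h⟩
    · obtain ⟨P, seen', hP, hsub, htr⟩ := ih h
      exact ⟨P, seen', by simp [hP],
        (Set.subset_union_left.trans Set.subset_union_left).trans hsub, htr⟩

lemma ET_fst_mem {s : List (Set Q)} {seen : Set Q} {tr : Set Q × Set Q × Set Q}
    (h : tr ∈ expandTriples δ F a s seen) : tr.1 ∈ s := by
  obtain ⟨P, seen', hP, _, rfl⟩ := ET_shape h; exact hP

lemma ET_comp_subset {s : List (Set Q)} {seen : Set Q} {tr : Set Q × Set Q × Set Q}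
    (h : tr ∈ expandTriples δ F a s seen) :
    tr.2.1 ∪ tr.2.2 ⊆ ⋃ q ∈ tr.1, δ q a := by
  obtain ⟨P, seen', hP, _, rfl⟩ := ET_shape h
  intro x hx
  rcases hx with hx | hx
  · exact hx.1.1
  · exact hx.1.1

lemma ET_left_sub_F {s : List (Set Q)} {seen : Set Q} {tr : Set Q × Set Q × Set Q}
    (h : tr ∈ expandTriples δ F a s seen) : tr.2.1 ⊆ F := by
  obtain ⟨P, seen', hP, _, rfl⟩ := ET_shape h
  exact fun x hx => hx.1.2

lemma ET_right_disj_F {s : List (Set Q)} {seen : Set Q} {tr : Set Q × Set Q × Set Q}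
    (h : tr ∈ expandTriples δ F a s seen) : Disjoint tr.2.2 F := by
  obtain ⟨P, seen', hP, _, rfl⟩ := ET_shape h
  exact Set.disjoint_left.2 fun x hx => hx.1.2

lemma ET_disj_seen {s : List (Set Q)} {seen : Set Q} {tr : Set Q × Set Q × Set Q}
    (h : tr ∈ expandTriples δ F a s seen) :
    Disjoint (tr.2.1 ∪ tr.2.2) seen := by
  obtain ⟨P, seen', hP, hsub, rfl⟩ := ET_shape h
  refine Set.disjoint_left.2 fun x hx hxs => ?_
  rcases hx with hx | hx
  · exact hx.2 (hsub hxs)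
  · exact hx.2 (hsub hxs)

lemma ET_cross_disj {s : List (Set Q)} {seen : Set Q} {tr tr' : Set Q × Set Q × Set Q}
    (h : tr ∈ expandTriples δ F a s seen) (h' : tr' ∈ expandTriples δ F a s seen)
    (hne : tr ≠ tr') :
    Disjoint (tr.2.1 ∪ tr.2.2) (tr'.2.1 ∪ tr'.2.2) := by
  induction s generalizing seen with
  | nil => simp [expandTriples] at h
  | cons Qi rest ih =>
    rw [expandTriples] at h h'
    rcases List.mem_cons.1 h with h | h <;> rcases List.mem_cons.1 h' with h' | h'
    · exact absurd (h.trans h'.symm) hne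
    · subst h
      refine Disjoint.symm ((ET_disj_seen h').mono_right ?_)
      intro x hx
      rcases hx with hx | hx
      · exact Or.inl (Or.inr hx)
      · exact Or.inr hx
    · subst h'
      refine (ET_disj_seen h).mono_right ?_
      intro x hx
      rcases hx with hx | hx
      · exact Or.inl (Or.inr hx)
      · exact Or.inr hx
    · exact ih h h' 

lemma ET_unique {s : List (Set Q)} {seen : Set Q} {tr tr' : Set Q × Set Q × Set Q}
    {X : Set Q} {b b' : Bool}
    (h : tr ∈ expandTriples δ F a s seen) (h' : tr' ∈ expandTriples δ F a s seen)
    (hX : X.Nonempty) (hb : X = trcomp b tr) (hb' : X = trcomp b' tr') :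
    tr = tr' ∧ b = b' := by
  obtain ⟨x, hx⟩ := hX
  have hsub : ∀ (c : Bool) (t : Set Q × Set Q × Set Q), trcomp c t ⊆ t.2.1 ∪ t.2.2 := by
    intro c t y hy
    cases c
    · exact Or.inl hy
    · exact Or.inr hy
  have htt' : tr = tr' := by
    by_contra hne
    exact (ET_cross_disj h h' hne).ne_of_mem (hsub b tr (hb ▸ hx)) (hsub b' tr' (hb' ▸ hx)) rfl
  subst htt'
  refine ⟨rfl, ?_⟩
  by_contra hbb
  have : x ∈ tr.2.1 ∧ x ∈ tr.2.2 := by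
    cases b <;> cases b' <;> simp_all [trcomp]
  exact (ET_right_disj_F h).ne_of_mem this.2 (ET_left_sub_F h this.1) rfl

lemma ET_place {s : List (Set Q)} {seen : Set Q} {q' : Q} (hq : q' ∉ seen) {i : ℕ}
    (hi : i < s.length) (hmem : q' ∈ ⋃ q ∈ s[i], δ q a) :
    ∃ j, j ≤ i ∧ ∃ (hj : j < s.length), ∃ tr ∈ expandTriples δ F a s seen,
      tr.1 = s[j] ∧ (q' ∈ tr.2.1 ∨ q' ∈ tr.2.2) := by
  induction s generalizing seen i with
  | nil => simp at hi
  | cons Qi rest ih =>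
    cases i with
    | zero =>
      refine ⟨0, le_rfl, by simp, _, by rw [expandTriples]; exact List.mem_cons_self, rfl, ?_⟩
      simp only [List.getElem_cons_zero] at hmem
      by_cases hF : q' ∈ F
      · exact Or.inl ⟨⟨hmem, hF⟩, hq⟩
      · exact Or.inr ⟨⟨hmem, hF⟩, hq⟩
    | succ i =>
      set l := (((⋃ q ∈ Qi, δ q a) ∩ F) \ seen) with hl
      set r := (((⋃ q ∈ Qi, δ q a) \ F) \ seen) with hr
      by_cases hq' : q' ∈ seen ∪ l ∪ r
      · refine ⟨0, by omega, by simp, _, by rw [expandTriples]; exact List.mem_cons_self, rfl, ?_⟩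
        rcases hq' with (hq' | hq') | hq'
        · exact absurd hq' hq
        · exact Or.inl hq'
        · exact Or.inr hq'
      · have hi' : i < rest.length := by simpa using hi
        obtain ⟨j, hji, hj, tr, htr, h1, h2⟩ := ih hq' hi' (by simpa using hmem)
        refine ⟨j + 1, by omega, by simpa using Nat.succ_lt_succ hj, tr, ?_, by simpa using h1, h2⟩
        rw [expandTriples]
        exact List.mem_cons_of_mem _ htr

end ET
section Slices
variable {A Q : Type*} {M : NBW A Q} {w : ℕ → A}

lemma slice_succ_def (n : ℕ) :
    rstSlice M w (n + 1) = sliceSucc M.trans M.acc (w n) (rstSlice M w n) := rfl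

lemma mem_sliceSucc_iff {δ : Q → A → Set Q} {F : Set Q} {a : A} {s : List (Set Q)}
    {X : Set Q} :
    X ∈ sliceSucc δ F a s ↔
      (∃ tr ∈ expandTriples δ F a s ∅, ∃ b : Bool, X = trcomp b tr) ∧ X.Nonempty := by
  classical
  unfold sliceSucc
  rw [List.mem_filter, List.mem_flatMap]
  constructor
  · rintro ⟨⟨tr, htr, hX⟩, hne⟩
    have hne' : X.Nonempty := by
      have := of_decide_eq_true hne
      exact this
    refine ⟨⟨tr, htr, ?_⟩, hne'⟩
    rw [List.mem_cons, List.mem_singleton] at hX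
    rcases hX with h | h
    · exact ⟨false, h⟩
    · exact ⟨true, h⟩
  · rintro ⟨⟨tr, htr, b, hb⟩, hne⟩
    refine ⟨⟨tr, htr, ?_⟩, decide_eq_true hne⟩
    rw [List.mem_cons, List.mem_singleton]
    cases b
    · exact Or.inl hb
    · exact Or.inr hb

lemma slice_mem_comp {n : ℕ} {X : Set Q} (h : X ∈ rstSlice M w (n + 1)) :
    ∃ tr ∈ expandTriples M.trans M.acc (w n) (rstSlice M w n) ∅, ∃ b : Bool,
      X = trcomp b tr :=
  (mem_sliceSucc_iff.1 h).1

lemma comp_mem_slice {n : ℕ} {tr : Set Q × Set Q × Set Q} {b : Bool}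
    (htr : tr ∈ expandTriples M.trans M.acc (w n) (rstSlice M w n) ∅)
    (hne : (trcomp b tr).Nonempty) : trcomp b tr ∈ rstSlice M w (n + 1) :=
  mem_sliceSucc_iff.2 ⟨⟨tr, htr, b, rfl⟩, hne⟩

lemma mem_slice_nonempty {n : ℕ} {X : Set Q} (h : X ∈ rstSlice M w n) : X.Nonempty := by
  cases n with
  | zero =>
    simp only [rstSlice, List.mem_singleton] at h
    exact h ▸ Set.singleton_nonempty _
  | succ n => exact (mem_sliceSucc_iff.1 h).2

open Classical in
/-- The parent node and the side (false = left/accepting) of a node of slice `k+1`. -/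
noncomputable def parentData (M : NBW A Q) (w : ℕ → A) (k : ℕ) (X : Set Q) :
    Set Q × Bool :=
  if h : ∃ p : (Set Q × Set Q × Set Q) × Bool,
      p.1 ∈ expandTriples M.trans M.acc (w k) (rstSlice M w k) ∅ ∧ X = trcomp p.2 p.1
  then (h.choose.1.1, h.choose.2) else ({M.init}, false)

lemma pd_eq {k : ℕ} {X : Set Q} {tr : Set Q × Set Q × Set Q} {b : Bool}
    (htr : tr ∈ expandTriples M.trans M.acc (w k) (rstSlice M w k) ∅)
    (hne : X.Nonempty) (hb : X = trcomp b tr) :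
    parentData M w k X = (tr.1, b) := by
  have h : ∃ p : (Set Q × Set Q × Set Q) × Bool,
      p.1 ∈ expandTriples M.trans M.acc (w k) (rstSlice M w k) ∅ ∧ X = trcomp p.2 p.1 :=
    ⟨(tr, b), htr, hb⟩
  rw [parentData, dif_pos h]
  obtain ⟨h1, h2⟩ := h.choose_spec
  obtain ⟨heq, hbe⟩ := ET_unique h1 htr hne h2 hb
  rw [heq, hbe]

/-- The (numeric) address of a node in the reduced split tree. -/
noncomputable def addr (M : NBW A Q) (w : ℕ → A) : ℕ → Set Q → ℕ
  | 0, _ => 0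
  | k + 1, X =>
      2 * addr M w k (parentData M w k X).1 + (parentData M w k X).2.toNat

lemma addr_lt_pow (k : ℕ) (X : Set Q) : addr M w k X < 2 ^ k := by
  induction k generalizing X with
  | zero => simp [addr]
  | succ k ih =>
    have := ih (parentData M w k X).1
    have hb : ((parentData M w k X).2.toNat) ≤ 1 := Bool.toNat_le _
    rw [addr, pow_succ]
    omega

lemma pd_spec {k : ℕ} {X : Set Q} (hX : X ∈ rstSlice M w (k + 1)) :
    (parentData M w k X).1 ∈ rstSlice M w k ∧
    Child M.trans M.acc (w k) (rstSlice M w k) (parentData M w k X).1 X ∧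
    ((parentData M w k X).2 = false →
      LeftChild M.trans M.acc (w k) (rstSlice M w k) (parentData M w k X).1 X) := by
  obtain ⟨tr, htr, b, hb⟩ := slice_mem_comp hX
  have hne : X.Nonempty := mem_slice_nonempty hX
  have hpd := pd_eq htr hne hb
  rw [hpd]
  refine ⟨ET_fst_mem htr, ?_, ?_⟩
  · cases b
    · exact Or.inl ⟨tr, htr, rfl, hb.symm, hne⟩
    · exact Or.inr ⟨tr, htr, rfl, hb.symm, hne⟩
  · intro hbf
    simp only at hbf
    subst hbf
    exact ⟨tr, htr, rfl, hb.symm, hne⟩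

lemma ET_map_fst {δ : Q → A → Set Q} {F : Set Q} {a : A} (s : List (Set Q)) (seen : Set Q) :
    (expandTriples δ F a s seen).map Prod.fst = s := by
  induction s generalizing seen with
  | nil => rfl
  | cons Qi rest ih => rw [expandTriples]; simp [ih]

lemma slice_sorted (n : ℕ) :
    (rstSlice M w n).Pairwise (fun X Y => addr M w n X < addr M w n Y) := by
  induction n with
  | zero => exact List.pairwise_singleton _ _
  | succ n ih =>
    rw [slice_succ_def]
    unfold sliceSucc
    have key : ((expandTriples M.trans M.acc (w n) (rstSlice M w n) ∅).flatMap
        fun tr => [tr.2.1, tr.2.2]).Pairwise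
        (fun X Y => X.Nonempty → Y.Nonempty →
          addr M w (n+1) X < addr M w (n+1) Y) := by
      rw [List.pairwise_flatMap]
      have hpair : (expandTriples M.trans M.acc (w n) (rstSlice M w n) ∅).Pairwise
          (fun tr tr' => addr M w n tr.1 < addr M w n tr'.1) := by
        have := ih
        rw [← ET_map_fst (δ := M.trans) (F := M.acc) (a := w n)
          (rstSlice M w n) ∅, List.pairwise_map] at this
        exact this
      constructor
      · intro tr htr
        refine List.Pairwise.cons ?_ (List.pairwise_singleton _ _)
        intro Y hY h1 h2
        simp only [List.mem_singleton] at hY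
        subst hY
        have e1 : addr M w (n+1) tr.2.1 = 2 * addr M w n tr.1 + 0 := by
          rw [addr, pd_eq (b := false) htr h1 rfl]
          simp
        have e2 : addr M w (n+1) tr.2.2 = 2 * addr M w n tr.1 + 1 := by
          rw [addr, pd_eq (b := true) htr h2 rfl]
          simp
        omega
      · rw [List.Pairwise.and_mem] at hpair ⊢
        refine hpair.imp ?_
        rintro tr tr' ⟨h1, h2, hlt⟩
        refine ⟨h1, h2, ?_⟩
        intro X hX Y hY hXne hYne
        have eX : ∃ b : Bool, X = trcomp b tr := by
          rw [List.mem_cons, List.mem_singleton] at hX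
          rcases hX with h | h
          · exact ⟨false, h⟩
          · exact ⟨true, h⟩
        have eY : ∃ b : Bool, Y = trcomp b tr' := by
          rw [List.mem_cons, List.mem_singleton] at hY
          rcases hY with h | h
          · exact ⟨false, h⟩
          · exact ⟨true, h⟩
        obtain ⟨bX, hbX⟩ := eX
        obtain ⟨bY, hbY⟩ := eY
        have e1 : addr M w (n+1) X = 2 * addr M w n tr.1 + bX.toNat := by
          rw [addr, pd_eq h1 hXne hbX]
        have e2 : addr M w (n+1) Y = 2 * addr M w n tr'.1 + bY.toNat := by
          rw [addr, pd_eq h2 hYne hbY]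
        have : bX.toNat ≤ 1 := Bool.toNat_le _
        have : bY.toNat ≤ 1 := Bool.toNat_le _
        omega
    have hflt := List.Pairwise.sublist
      (List.filter_sublist (p := fun S : Set Q => @decide S.Nonempty (Classical.propDecidable _))) key
    rw [List.Pairwise.and_mem] at hflt ⊢
    refine hflt.imp ?_
    rintro X Y ⟨h1, h2, himp⟩
    refine ⟨h1, h2, ?_⟩
    classical
    have hX : X.Nonempty := of_decide_eq_true (List.mem_filter.1 h1).2
    have hY : Y.Nonempty := of_decide_eq_true (List.mem_filter.1 h2).2
    exact himp hX hY

lemma addr_inj_slice {n : ℕ} {X Y : Set Q} (hX : X ∈ rstSlice M w n)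
    (hY : Y ∈ rstSlice M w n) (h : addr M w n X = addr M w n Y) : X = Y := by
  obtain ⟨i, hi, rfl⟩ := List.mem_iff_getElem.1 hX
  obtain ⟨j, hj, rfl⟩ := List.mem_iff_getElem.1 hY
  have hs := slice_sorted (M := M) (w := w) n
  rw [List.pairwise_iff_getElem] at hs
  rcases lt_trichotomy i j with hij | hij | hij
  · exact absurd h (hs i j hi hj hij).ne
  · subst hij; rfl
  · exact absurd h.symm (hs j i hj hi hij).ne

end Slices
section Dir1
variable {A Q : Type*} {M : NBW A Q} {w : ℕ → A} {ρ : ℕ → Q}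

lemma antitone_stab (f : ℕ → ℕ) (h : ∀ n, f (n + 1) ≤ f n) :
    ∃ N, ∀ m ≥ N, f m = f N := by
  have hanti : Antitone f := antitone_nat_of_succ_le h
  have hne : (Set.range f).Nonempty := ⟨f 0, 0, rfl⟩
  obtain ⟨N, hN⟩ := Nat.sInf_mem hne
  refine ⟨N, fun m hm => ?_⟩
  have h1 : f m ≤ f N := hanti hm
  have h2 : sInf (Set.range f) ≤ f m := Nat.sInf_le ⟨m, rfl⟩
  omega

lemma run_nodes (hρ : M.IsRun w ρ) :
    ∃ u : ℕ → Set Q, (∀ n, u n ∈ rstSlice M w n ∧ ρ n ∈ u n) ∧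
      ∀ n, addr M w (n + 1) (u (n + 1)) / 2 ≤ addr M w n (u n) ∧
        (ρ (n + 1) ∈ M.acc → addr M w (n + 1) (u (n + 1)) % 2 = 0) := by
  classical
  have claim : ∀ n (X : Set Q), X ∈ rstSlice M w n → ρ n ∈ X →
      ∃ Y, (Y ∈ rstSlice M w (n + 1) ∧ ρ (n + 1) ∈ Y) ∧
        addr M w (n + 1) Y / 2 ≤ addr M w n X ∧
        (ρ (n + 1) ∈ M.acc → addr M w (n + 1) Y % 2 = 0) := by
    intro n X hX hρX
    obtain ⟨i, hi, hEq⟩ := List.mem_iff_getElem.1 hX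
    have hmem : ρ (n + 1) ∈ ⋃ q ∈ (rstSlice M w n)[i], M.trans q (w n) := by
      rw [hEq]; exact Set.mem_biUnion hρX (hρ.2 n)
    obtain ⟨j, hji, hj, tr, htr, h1, h2⟩ :=
      ET_place (F := M.acc) (seen := (∅ : Set Q)) (Set.notMem_empty _) hi hmem
    have hple : addr M w n tr.1 ≤ addr M w n X := by
      rcases eq_or_lt_of_le hji with h | h
      · subst h; rw [h1, hEq]
      · have hs := slice_sorted (M := M) (w := w) n
        rw [List.pairwise_iff_getElem] at hs
        rw [h1, ← hEq]; exact (hs j i hj hi h).le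
    have hsplit : ∃ b : Bool, ρ (n + 1) ∈ trcomp b tr ∧ (ρ (n + 1) ∈ M.acc → b = false) := by
      rcases h2 with h2 | h2
      · exact ⟨false, h2, fun _ => rfl⟩
      · exact ⟨true, h2, fun hacc =>
          absurd hacc (Set.disjoint_left.1 (ET_right_disj_F htr) h2)⟩
    obtain ⟨b, hbmem, hbacc⟩ := hsplit
    have hne : (trcomp b tr).Nonempty := ⟨_, hbmem⟩
    have ea : addr M w (n + 1) (trcomp b tr) = 2 * addr M w n tr.1 + b.toNat := by
      rw [addr, pd_eq htr hne rfl]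
    have hble : b.toNat ≤ 1 := Bool.toNat_le _
    refine ⟨trcomp b tr, ⟨comp_mem_slice htr hne, hbmem⟩, by omega, fun hacc => ?_⟩
    have := hbacc hacc
    subst this
    simp only [Bool.toNat_false] at ea
    omega
  choose f hf using claim
  let U : ∀ n, {X : Set Q // X ∈ rstSlice M w n ∧ ρ n ∈ X} := fun n =>
    Nat.rec
      ⟨{M.init}, List.mem_singleton_self _, by rw [hρ.1]; exact Set.mem_singleton _⟩
      (fun n p => ⟨f n p.1 p.2.1 p.2.2, (hf n p.1 p.2.1 p.2.2).1⟩) n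
  exact ⟨fun n => (U n).1, fun n => (U n).2,
    fun n => (hf n (U n).1 (U n).2.1 (U n).2.2).2⟩

/-- iterated parent: `ancGo m lvl X` is the ancestor `m` levels above node `X`
at level `lvl`. -/
noncomputable def ancGo (M : NBW A Q) (w : ℕ → A) : ℕ → ℕ → Set Q → Set Q
  | 0, _, X => X
  | m + 1, lvl, X => ancGo M w m (lvl - 1) (parentData M w (lvl - 1) X).1

lemma ancGo_spec : ∀ (m lvl : ℕ) (X : Set Q), m ≤ lvl → X ∈ rstSlice M w lvl →
    ancGo M w m lvl X ∈ rstSlice M w (lvl - m) ∧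
      addr M w (lvl - m) (ancGo M w m lvl X) = addr M w lvl X / 2 ^ m := by
  intro m
  induction m with
  | zero => intro lvl X _ hX; simpa [ancGo] using hX
  | succ m ih =>
    intro lvl X hm hX
    obtain ⟨k, rfl⟩ : ∃ k, lvl = k + 1 := ⟨lvl - 1, by omega⟩
    have hpd := pd_spec hX
    have hP : (parentData M w k X).1 ∈ rstSlice M w k := hpd.1
    have haddr : addr M w k (parentData M w k X).1 = addr M w (k + 1) X / 2 := by
      have : addr M w (k + 1) X =
          2 * addr M w k (parentData M w k X).1 + (parentData M w k X).2.toNat := by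
        rw [addr]
      have hb : (parentData M w k X).2.toNat ≤ 1 := Bool.toNat_le _
      omega
    have hh : k + 1 - (m + 1) = k - m := by omega
    have hgo : ancGo M w (m + 1) (k + 1) X =
        ancGo M w m k (parentData M w k X).1 := by
      rw [ancGo]; norm_num
    obtain ⟨ih1, ih2⟩ := ih k (parentData M w k X).1 (by omega) hP
    refine ⟨by rw [hgo, hh]; exact ih1, ?_⟩
    rw [hgo, hh, ih2, haddr, pow_succ, Nat.div_div_eq_div_mul, mul_comm]

lemma ancGo_step : ∀ (m lvl : ℕ) (X : Set Q), m + 1 ≤ lvl → X ∈ rstSlice M w lvl →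
    ancGo M w (m + 1) lvl X =
      (parentData M w (lvl - m - 1) (ancGo M w m lvl X)).1 := by
  intro m
  induction m with
  | zero =>
    intro lvl X hm hX
    rw [ancGo]
    simp [ancGo]
  | succ m ih =>
    intro lvl X hm hX
    obtain ⟨k, rfl⟩ : ∃ k, lvl = k + 1 := ⟨lvl - 1, by omega⟩
    have hpd := pd_spec hX
    have e1 : ancGo M w (m + 1 + 1) (k + 1) X =
        ancGo M w (m + 1) k (parentData M w k X).1 := by
      rw [ancGo]; norm_num
    have e2 : ancGo M w (m + 1) (k + 1) X = ancGo M w m k (parentData M w k X).1 := by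
      rw [ancGo]; norm_num
    rw [e1, e2, show k + 1 - (m + 1) - 1 = k - m - 1 from by omega,
      ih k _ (by omega) hpd.1]

end Dir1
section Dir1Main
variable {A Q : Type*} {M : NBW A Q} {w : ℕ → A}

lemma dir1 (hW : w ∈ M.Lang) (i : ℕ) :
    ∃ j ≥ i, ∃ S T : Set Q,
      LeftChild M.trans M.acc (w j) (rstSlice M w j) S T ∧
      ∃ b : ℕ → Set Q, b 0 = T ∧
        ∀ m, Child M.trans M.acc (w (j + 1 + m)) (rstSlice M w (j + 1 + m))
          (b m) (b (m + 1)) := by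
  obtain ⟨ρ, hρ, q, hq, hinf⟩ := hW
  obtain ⟨u, hu, hstep⟩ := run_nodes hρ
  set Aa : ℕ → ℕ := fun n => addr M w n (u n) with hAa
  set P : ℕ → ℕ → ℕ := fun k n => Aa n / 2 ^ (n - k) with hPdef
  have hPsucc : ∀ k n, k ≤ n → P k (n + 1) ≤ P k n := by
    intro k n hkn
    have h1 : n + 1 - k = (n - k) + 1 := by omega
    have h2 : Aa (n + 1) / 2 ^ (n + 1 - k) = (Aa (n + 1) / 2) / 2 ^ (n - k) := by
      rw [h1, pow_succ, Nat.div_div_eq_div_mul, mul_comm]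
    calc P k (n + 1) = (Aa (n + 1) / 2) / 2 ^ (n - k) := h2
    _ ≤ Aa n / 2 ^ (n - k) := Nat.div_le_div_right ((hstep n).1)
    _ = P k n := rfl
  have hPmono : ∀ k m n, k ≤ m → m ≤ n → P k n ≤ P k m := by
    intro k m n hkm hmn
    induction n, hmn using Nat.le_induction with
    | base => exact le_rfl
    | succ n hmn ih => exact le_trans (hPsucc k n (by omega)) ih
  have hstab : ∀ k, ∃ N, k ≤ N ∧ ∀ n ≥ N, P k n = P k N := by
    intro k
    obtain ⟨N', hN'⟩ := antitone_stab (fun m => P k (k + m))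
      (fun m => hPsucc k (k + m) (by omega))
    refine ⟨k + N', by omega, fun n hn => ?_⟩
    have := hN' (n - k) (by omega)
    simpa [show k + (n - k) = n from by omega] using this
  choose N hNk hN using hstab
  set p : ℕ → ℕ := fun k => P k (N k) with hpdef
  have hpval : ∀ k n, N k ≤ n → P k n = p k := fun k n hn => hN k n hn
  have hcomp : ∀ k, p k = p (k + 1) / 2 := by
    intro k
    set n := max (N k) (N (k + 1)) with hn
    have h1 : P k n = p k := hpval k n (by omega)
    have h2 : P (k + 1) n = p (k + 1) := hpval (k + 1) n (by omega)
    have hk1 : k + 1 ≤ n := le_trans (hNk (k + 1)) (by omega)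
    have h3 : P k n = P (k + 1) n / 2 := by
      show Aa n / 2 ^ (n - k) = (Aa n / 2 ^ (n - (k + 1))) / 2
      rw [Nat.div_div_eq_div_mul, ← pow_succ, show n - (k + 1) + 1 = n - k from by omega]
    rw [← h1, ← h2, h3]
  set x : ℕ → ℕ := fun k => p (k + 1) % 2 with hxdef
  have hpx : ∀ k, p (k + 1) = 2 * p k + x k := by
    intro k
    have := Nat.div_add_mod (p (k + 1)) 2
    have hx : x k = p (k + 1) % 2 := rfl
    rw [hcomp k]
    omega
  have hzero : ∀ K, ∃ k ≥ K, x k = 0 := by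
    intro K
    by_contra hcon
    push_neg at hcon
    have hone : ∀ k, K ≤ k → x k = 1 := by
      intro k hk
      have h1 : p (k + 1) % 2 < 2 := Nat.mod_lt _ (by norm_num)
      have h2 := hcon k hk
      simp only [hxdef] at h2 ⊢
      omega
    have hallones : ∀ d, p (K + d) = p K * 2 ^ d + (2 ^ d - 1) := by
      intro d
      induction d with
      | zero => simp
      | succ d ihd =>
        have h1 : p (K + d + 1) = 2 * p (K + d) + x (K + d) := hpx (K + d)
        have h2 : x (K + d) = 1 := hone (K + d) (by omega)
        have h3 : (1 : ℕ) ≤ 2 ^ d := Nat.one_le_two_pow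
        have h4 : p K * 2 ^ (d + 1) = 2 * (p K * 2 ^ d) := by ring
        have h5 : (2 : ℕ) ^ (d + 1) = 2 * 2 ^ d := by ring
        rw [show K + (d + 1) = K + d + 1 from by omega, h1, h2, ihd, h4, h5]
        omega
    obtain ⟨ii, hii, hρi⟩ := hinf (max (N K) (K + 1))
    set n : ℕ := ii - 1 with hndef
    have hii1 : n + 1 = ii := by omega
    have heven : Aa (n + 1) % 2 = 0 := (hstep n).2 (by rw [hii1, hρi]; exact hq)
    set e : ℕ := n + 1 - K with hedef
    have he : 1 ≤ e := by omega
    have hPK : P K (n + 1) = p K := hpval K (n + 1) (by omega)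
    have hePos : (0 : ℕ) < 2 ^ e := Nat.pow_pos (by norm_num)
    have hdm : Aa (n + 1) = p K * 2 ^ e + Aa (n + 1) % 2 ^ e := by
      have hd : 2 ^ e * (Aa (n + 1) / 2 ^ e) + Aa (n + 1) % 2 ^ e = Aa (n + 1) :=
        Nat.div_add_mod _ _
      have hq2 : Aa (n + 1) / 2 ^ e = p K := hPK
      rw [← hq2, mul_comm]
      exact hd.symm
    have hup : p (n + 1) ≤ Aa (n + 1) := by
      have h1 : p (n + 1) = P (n + 1) (N (n + 1)) := rfl
      have h2 : P (n + 1) (N (n + 1)) ≤ P (n + 1) (n + 1) :=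
        hPmono (n + 1) (n + 1) (N (n + 1)) le_rfl (hNk (n + 1))
      have h3 : P (n + 1) (n + 1) = Aa (n + 1) := by
        show Aa (n+1) / 2 ^ (n + 1 - (n + 1)) = Aa (n + 1)
        simp
      omega
    have hpn1 : p (n + 1) = p K * 2 ^ e + (2 ^ e - 1) := by
      have := hallones e
      rwa [show K + e = n + 1 from by omega] at this
    have hmod : Aa (n + 1) % 2 ^ e < 2 ^ e := Nat.mod_lt _ hePos
    have hdvd : 2 ∣ p K * 2 ^ e := Dvd.dvd.mul_left (dvd_pow_self 2 (by omega)) _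
    have hdvd2 : 2 ∣ (2 : ℕ) ^ e := dvd_pow_self 2 (by omega)
    have h2e : (2 : ℕ) ≤ 2 ^ e := by
      calc (2:ℕ) = 2 ^ 1 := by norm_num
      _ ≤ 2 ^ e := Nat.pow_le_pow_right (by norm_num) he
    omega
  -- the limit branch
  set anc : ℕ → ℕ → Set Q := fun k n => ancGo M w (n - k) n (u n) with hancdef
  have hanc1 : ∀ k n, k ≤ n →
      anc k n ∈ rstSlice M w k ∧ addr M w k (anc k n) = P k n := by
    intro k n hkn
    have := ancGo_spec (n - k) n (u n) (by omega) (hu n).1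
    rwa [show n - (n - k) = k from by omega] at this
  have hancstep : ∀ k n, k + 1 ≤ n →
      anc k n = (parentData M w k (anc (k + 1) n)).1 := by
    intro k n hkn
    have := ancGo_step (n - (k + 1)) n (u n) (by omega) (hu n).1
    rw [show n - (k + 1) + 1 = n - k from by omega,
      show n - (n - (k + 1)) - 1 = k from by omega] at this
    exact this
  set NN : ℕ → ℕ := fun k => max (N k) (max (N (k + 1)) (k + 1)) with hNNdef
  set v : ℕ → Set Q := fun k => anc k (NN k) with hvdef
  have hv : ∀ k n, N k ≤ n → k ≤ n → anc k n = v k := by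
    intro k n h1 h2
    have ha := hanc1 k n h2
    have hb := hanc1 k (NN k) (le_trans (hNk k) (le_max_left _ _))
    refine addr_inj_slice ha.1 hb.1 ?_
    rw [ha.2, hb.2, hpval k n h1, hpval k (NN k) (le_max_left _ _)]
  have hlink : ∀ k, Child M.trans M.acc (w k) (rstSlice M w k) (v k) (v (k + 1)) ∧
      (x k = 0 → LeftChild M.trans M.acc (w k) (rstSlice M w k) (v k) (v (k + 1))) := by
    intro k
    set n := NN k with hn
    have hnN : N k ≤ n := le_max_left _ _
    have hnN1 : N (k + 1) ≤ n := le_max_of_le_right (le_max_left _ _)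
    have hnk1 : k + 1 ≤ n := le_max_of_le_right (le_max_right _ _)
    have hmem : anc (k + 1) n ∈ rstSlice M w (k + 1) := (hanc1 (k + 1) n hnk1).1
    have hst := hancstep k n hnk1
    have hpd := pd_spec hmem
    have hvk : anc k n = v k := rfl
    have hvk1 : anc (k + 1) n = v (k + 1) := hv (k + 1) n hnN1 hnk1
    have hbit : (parentData M w k (anc (k + 1) n)).2.toNat = x k := by
      have h1 : addr M w (k + 1) (anc (k + 1) n) = p (k + 1) := by
        rw [(hanc1 (k + 1) n hnk1).2, hpval (k + 1) n hnN1]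
      have h2 : addr M w (k + 1) (anc (k + 1) n) =
          2 * addr M w k (parentData M w k (anc (k + 1) n)).1 +
            (parentData M w k (anc (k + 1) n)).2.toNat := by rw [addr]
      have h3 : (parentData M w k (anc (k + 1) n)).2.toNat ≤ 1 := Bool.toNat_le _
      have h4 : x k = p (k + 1) % 2 := rfl
      omega
    constructor
    · have := hpd.2.1
      rw [← hst, hvk, hvk1] at this
      exact this
    · intro hx0
      have hb : (parentData M w k (anc (k + 1) n)).2 = false := by
        have := hbit
        rw [hx0] at this
        cases hbb : (parentData M w k (anc (k + 1) n)).2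
        · rfl
        · rw [hbb] at this; simp at this
      have := hpd.2.2 hb
      rw [← hst, hvk, hvk1] at this
      exact this
  obtain ⟨k, hk, hxk⟩ := hzero i
  refine ⟨k, hk, v k, v (k + 1), (hlink k).2 hxk, fun m => v (k + 1 + m), rfl, fun m => ?_⟩
  exact (hlink (k + 1 + m)).1

end Dir1Main
section ChildLemmas
variable {A Q : Type*} {δ : Q → A → Set Q} {F : Set Q} {a : A} {s : List (Set Q)}
  {S S' X : Set Q}

lemma Child.nonempty (h : Child δ F a s S X) : X.Nonempty := by
  rcases h with ⟨tr, htr, h1, h2, h3⟩ | ⟨tr, htr, h1, h2, h3⟩ <;> exact h3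

lemma Child.fst_mem (h : Child δ F a s S X) : S ∈ s := by
  rcases h with ⟨tr, htr, h1, h2, h3⟩ | ⟨tr, htr, h1, h2, h3⟩ <;> exact h1 ▸ ET_fst_mem htr

lemma Child.subset (h : Child δ F a s S X) : X ⊆ ⋃ q ∈ S, δ q a := by
  rcases h with ⟨tr, htr, h1, h2, h3⟩ | ⟨tr, htr, h1, h2, h3⟩
  · exact h1 ▸ h2 ▸ fun y hy => ET_comp_subset htr (Or.inl hy)
  · exact h1 ▸ h2 ▸ fun y hy => ET_comp_subset htr (Or.inr hy)

lemma Child.comp (h : Child δ F a s S X) :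
    ∃ tr ∈ expandTriples δ F a s ∅, ∃ b : Bool, tr.1 = S ∧ X = trcomp b tr := by
  rcases h with ⟨tr, htr, h1, h2, h3⟩ | ⟨tr, htr, h1, h2, h3⟩
  · exact ⟨tr, htr, false, h1, h2.symm⟩
  · exact ⟨tr, htr, true, h1, h2.symm⟩

lemma Child.parent_eq (h : Child δ F a s S X) (h' : Child δ F a s S' X) : S = S' := by
  obtain ⟨tr, htr, b, h1, h2⟩ := h.comp
  obtain ⟨tr', htr', b', h1', h2'⟩ := h'.comp
  obtain ⟨e, _⟩ := ET_unique htr htr' h.nonempty h2 h2'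
  rw [← h1, ← h1', e]

lemma LeftChild.sub_F (h : LeftChild δ F a s S X) : X ⊆ F := by
  obtain ⟨tr, htr, h1, h2, h3⟩ := h
  exact h2 ▸ ET_left_sub_F htr

end ChildLemmas

section Dir2
variable {A Q : Type*} {M : NBW A Q} {w : ℕ → A}

lemma slice_disj {n : ℕ} {X Y : Set Q} (hX : X ∈ rstSlice M w (n + 1))
    (hY : Y ∈ rstSlice M w (n + 1)) (hne : X ≠ Y) : Disjoint X Y := by
  obtain ⟨tr, htr, bX, hbX⟩ := slice_mem_comp hX
  obtain ⟨tr', htr', bY, hbY⟩ := slice_mem_comp hY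
  have hXne := mem_slice_nonempty hX
  have hYne := mem_slice_nonempty hY
  by_cases he : tr = tr'
  · subst he
    have hbb : bX ≠ bY := by
      rintro rfl
      exact hne (hbX.trans hbY.symm)
    have hLR : Disjoint tr.2.1 tr.2.2 :=
      Set.disjoint_left.2 fun y hy hy' =>
        Set.disjoint_left.1 (ET_right_disj_F htr) hy' (ET_left_sub_F htr hy)
    cases bX <;> cases bY <;> simp_all [trcomp] <;> exact hLR.symm
  · have := ET_cross_disj htr htr' he
    refine Set.disjoint_left.2 fun y hy hy' => ?_
    have h1 : y ∈ tr.2.1 ∪ tr.2.2 := by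
      cases bX <;> simp [trcomp] at hbX <;> rw [hbX] at hy
      · exact Or.inl hy
      · exact Or.inr hy
    have h2 : y ∈ tr'.2.1 ∪ tr'.2.2 := by
      cases bY <;> simp [trcomp] at hbY <;> rw [hbY] at hy'
      · exact Or.inl hy'
      · exact Or.inr hy'
    exact Set.disjoint_left.1 this h1 h2

/-- a full branch of the reduced split tree -/
def IsBranch (M : NBW A Q) (w : ℕ → A) (β : ℕ → Set Q) : Prop :=
  ∀ n, Child M.trans M.acc (w n) (rstSlice M w n) (β n) (β (n + 1))

lemma IsBranch.mem {β : ℕ → Set Q} (h : IsBranch M w β) (n : ℕ) :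
    β n ∈ rstSlice M w n :=
  (h n).fst_mem

lemma extend_back {j : ℕ} {S T : Set Q} {b : ℕ → Set Q}
    (hST : Child M.trans M.acc (w j) (rstSlice M w j) S T) (hb0 : b 0 = T)
    (hb : ∀ m, Child M.trans M.acc (w (j + 1 + m)) (rstSlice M w (j + 1 + m))
      (b m) (b (m + 1))) :
    ∃ β : ℕ → Set Q, IsBranch M w β ∧ β j = S ∧ β (j + 1) = T := by
  classical
  have hSmem : S ∈ rstSlice M w j := hST.fst_mem
  let step : ∀ m : ℕ, {X : Set Q // X ∈ rstSlice M w (j - m)} →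
      {X : Set Q // X ∈ rstSlice M w (j - (m + 1))} := fun m p =>
    if h : m < j then
      ⟨(parentData M w (j - m - 1) p.1).1, by
        have hmem : p.1 ∈ rstSlice M w ((j - m - 1) + 1) := by
          rw [show j - m - 1 + 1 = j - m from by omega]; exact p.2
        rw [show j - (m + 1) = j - m - 1 from by omega]
        exact (pd_spec hmem).1⟩
    else ⟨p.1, by rw [show j - (m + 1) = j - m from by omega]; exact p.2⟩
  let Ψ : ∀ m : ℕ, {X : Set Q // X ∈ rstSlice M w (j - m)} := fun m =>
    Nat.rec ⟨S, hSmem⟩ step m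
  have hΨstep : ∀ m, m < j →
      Child M.trans M.acc (w (j - m - 1)) (rstSlice M w (j - m - 1))
        (Ψ (m + 1)).1 (Ψ m).1 := by
    intro m h
    have he : Ψ (m + 1) = step m (Ψ m) := rfl
    rw [he]
    simp only [step, dif_pos h]
    have hmem : (Ψ m).1 ∈ rstSlice M w ((j - m - 1) + 1) := by
      rw [show j - m - 1 + 1 = j - m from by omega]; exact (Ψ m).2
    exact (pd_spec hmem).2.1
  refine ⟨fun n => if n ≤ j then (Ψ (j - n)).1 else b (n - (j + 1)), ?_, ?_, ?_⟩
  · intro n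
    beta_reduce
    rcases lt_trichotomy n j with hn | hn | hn
    · have e1 : (if n ≤ j then (Ψ (j - n)).1 else b (n - (j + 1))) = (Ψ (j - n)).1 :=
        if_pos (by omega)
      have e2 : (if n + 1 ≤ j then (Ψ (j - (n + 1))).1 else b (n + 1 - (j + 1)))
          = (Ψ (j - (n + 1))).1 := if_pos (by omega)
      rw [e1, e2]
      have := hΨstep (j - n - 1) (by omega)
      rw [show j - (j - n - 1) - 1 = n from by omega] at this
      rw [show j - n - 1 + 1 = j - n from by omega] at this
      rw [show j - n - 1 = j - (n + 1) from by omega] at this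
      exact this
    · subst hn
      have e1 : (if n ≤ n then (Ψ (n - n)).1 else b (n - (n + 1))) = S := by
        rw [if_pos le_rfl, Nat.sub_self]; rfl
      have e2 : (if n + 1 ≤ n then (Ψ (n - (n + 1))).1 else b (n + 1 - (n + 1))) = T := by
        rw [if_neg (by omega), Nat.sub_self, hb0]
      rw [e1, e2]
      exact hST
    · have e1 : (if n ≤ j then (Ψ (j - n)).1 else b (n - (j + 1))) = b (n - (j + 1)) :=
        if_neg (by omega)
      have e2 : (if n + 1 ≤ j then (Ψ (j - (n + 1))).1 else b (n + 1 - (j + 1)))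
          = b (n - (j + 1) + 1) := by
        rw [if_neg (by omega), show n + 1 - (j + 1) = n - (j + 1) + 1 from by omega]
      rw [e1, e2]
      have := hb (n - (j + 1))
      rwa [show j + 1 + (n - (j + 1)) = n from by omega] at this
  · beta_reduce
    rw [if_pos le_rfl, Nat.sub_self]; rfl
  · beta_reduce
    rw [if_neg (by omega), Nat.sub_self, hb0]

end Dir2
section Dir2Main
variable {A Q : Type*} {M : NBW A Q} {w : ℕ → A}

lemma branches_finite [Fintype Q] : Finite {β : ℕ → Set Q // IsBranch M w β} := by
  classical
  by_contra hfin
  rw [not_finite_iff_infinite] at hfin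
  set c := Fintype.card Q with hc
  let e : ℕ ↪ {β : ℕ → Set Q // IsBranch M w β} := Infinite.natEmbedding _
  let g : Fin (c + 1) → {β : ℕ → Set Q // IsBranch M w β} := fun p => e p.1
  have hginj : Function.Injective g := by
    intro p p' h
    exact Fin.ext (e.injective h)
  have hpers : ∀ p p' : Fin (c + 1), p ≠ p' →
      ∃ n0, ∀ n ≥ n0, (g p).1 n ≠ (g p').1 n := by
    intro p p' hne
    have hne' : (g p).1 ≠ (g p').1 := fun h => hne (hginj (Subtype.ext h))
    obtain ⟨n, hn⟩ := Function.ne_iff.1 hne'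
    refine ⟨n, fun m hm => ?_⟩
    induction m, hm using Nat.le_induction with
    | base => exact hn
    | succ m hm ih =>
      intro hEq
      have h1 := (g p).2 m
      have h2 := (g p').2 m
      rw [← hEq] at h2
      exact ih (h1.parent_eq h2)
  let D : Fin (c + 1) → Fin (c + 1) → ℕ := fun p p' =>
    if h : p ≠ p' then (hpers p p' h).choose else 0
  set M0 := (Finset.univ.sup fun p => Finset.univ.sup fun p' => D p p') + 1 with hM0
  have hdiff : ∀ p p', p ≠ p' → (g p).1 M0 ≠ (g p').1 M0 := by
    intro p p' h
    have hD : D p p' = (hpers p p' h).choose := dif_pos h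
    have h1 : D p p' ≤ Finset.univ.sup fun p' => D p p' :=
      Finset.le_sup (Finset.mem_univ p')
    have h2 : (Finset.univ.sup fun p' => D p p') ≤
        Finset.univ.sup fun p => Finset.univ.sup fun p' => D p p' :=
      Finset.le_sup (f := fun p => Finset.univ.sup fun p' => D p p') (Finset.mem_univ p)
    exact (hpers p p' h).choose_spec M0 (by omega)
  obtain ⟨M1, hM1⟩ : ∃ M1, M0 = M1 + 1 := ⟨_, rfl⟩
  have hselect : ∀ p : Fin (c + 1), ∃ q : Q, q ∈ (g p).1 M0 := fun p =>
    mem_slice_nonempty ((g p).2.mem M0)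
  choose sel hsel using hselect
  have hselinj : Function.Injective sel := by
    intro p p' h
    by_contra hne
    have hm1 : (g p).1 M0 ∈ rstSlice M w (M1 + 1) := by rw [← hM1]; exact (g p).2.mem M0
    have hm2 : (g p').1 M0 ∈ rstSlice M w (M1 + 1) := by rw [← hM1]; exact (g p').2.mem M0
    have hd := slice_disj hm1 hm2 (hdiff p p' hne)
    exact Set.disjoint_left.1 hd (hsel p) (h ▸ hsel p')
  have hcard := Fintype.card_le_of_injective sel hselinj
  rw [Fintype.card_fin] at hcard
  omega

lemma branch_run {β : ℕ → Set Q} [Fintype Q] (hβ : IsBranch M w β)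
    (hL : ∀ K, ∃ k ≥ K, LeftChild M.trans M.acc (w k) (rstSlice M w k)
      (β k) (β (k + 1))) :
    w ∈ M.Lang := by
  classical
  have hmem : ∀ n, β n ∈ rstSlice M w n := hβ.mem
  have hne : ∀ n, (β n).Nonempty := fun n => mem_slice_nonempty (hmem n)
  have hβ0 : β 0 = {M.init} := List.mem_singleton.1 (hmem 0)
  have hpred : ∀ n q, q ∈ β (n + 1) → ∃ p ∈ β n, q ∈ M.trans p (w n) := by
    intro n q hq
    have := (hβ n).subset hq
    simpa using this
  set Path : ℕ → Q → ℕ → Prop := fun n q m =>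
    ∃ g : ℕ → Q, g 0 = q ∧ (∀ k < m, g (k + 1) ∈ M.trans (g k) (w (n + k))) ∧
      ∀ k ≤ m, g k ∈ β (n + k) with hPathdef
  have hmono : ∀ n q m m', m' ≤ m → Path n q m → Path n q m' := by
    rintro n q m m' hmm ⟨g, h1, h2, h3⟩
    exact ⟨g, h1, fun k hk => h2 k (by omega), fun k hk => h3 k (by omega)⟩
  have hpath : ∀ m n, ∃ q ∈ β n, Path n q m := by
    intro m
    induction m with
    | zero =>
      intro n
      obtain ⟨q, hq⟩ := hne n
      refine ⟨q, hq, fun _ => q, rfl, fun k hk => by omega, fun k hk => ?_⟩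
      rw [show k = 0 from by omega, Nat.add_zero]
      exact hq
    | succ m ih =>
      intro n
      obtain ⟨q', hq', g', h1, h2, h3⟩ := ih (n + 1)
      obtain ⟨p, hp, hqp⟩ := hpred n q' hq'
      refine ⟨p, hp, fun k => if k = 0 then p else g' (k - 1), if_pos rfl, ?_, ?_⟩
      · intro k hk
        beta_reduce
        cases k with
        | zero =>
          simpa [h1] using hqp
        | succ k =>
          have e1 : (if k + 1 + 1 = 0 then p else g' (k + 1 + 1 - 1)) = g' (k + 1) := by
            norm_num
          have e2 : (if k + 1 = 0 then p else g' (k + 1 - 1)) = g' k := by norm_num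
          rw [e1, e2, show n + (k + 1) = n + 1 + k from by omega]
          exact h2 k (by omega)
      · intro k hk
        beta_reduce
        cases k with
        | zero => simpa using hp
        | succ k =>
          have e2 : (if k + 1 = 0 then p else g' (k + 1 - 1)) = g' k := by norm_num
          rw [e2, show n + (k + 1) = n + 1 + k from by omega]
          exact h3 k (by omega)
  set Good : ℕ → Q → Prop := fun n q => q ∈ β n ∧ ∀ m, Path n q m with hGooddef
  have hgood : ∀ n, ∃ q, Good n q := by
    intro n
    by_contra hcon
    push_neg at hcon
    have hcon' : ∀ q : Q, q ∈ β n → ∃ m, ¬ Path n q m := by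
      intro q hq
      have := hcon q
      rw [hGooddef] at this
      simp only [not_and, not_forall] at this
      exact this hq
    set bnd : Q → ℕ := fun q => if h : ∃ m, ¬ Path n q m then h.choose else 0 with hbnd
    set B := Finset.univ.sup bnd with hB
    obtain ⟨q, hq, hP⟩ := hpath B n
    obtain ⟨m0, hm0⟩ : ∃ m, ¬ Path n q m := hcon' q hq
    have hex : ∃ m, ¬ Path n q m := ⟨m0, hm0⟩
    have h1 : bnd q = hex.choose := dif_pos hex
    have h2 : bnd q ≤ B := Finset.le_sup (Finset.mem_univ q)
    exact hex.choose_spec (hmono n q B hex.choose (by omega) hP)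
  have hstep : ∀ n q, Good n q → ∃ q', q' ∈ M.trans q (w n) ∧ Good (n + 1) q' := by
    intro n q hg
    by_contra hcon
    push_neg at hcon
    have hcon' : ∀ q' : Q, q' ∈ M.trans q (w n) → q' ∈ β (n + 1) →
        ∃ m, ¬ Path (n + 1) q' m := by
      intro q' h h'
      have := hcon q' h
      rw [hGooddef] at this
      simp only [not_and, not_forall] at this
      exact this h'
    set bnd : Q → ℕ := fun q' =>
      if h : ∃ m, ¬ Path (n + 1) q' m then h.choose else 0 with hbnd
    set B := Finset.univ.sup bnd with hB
    obtain ⟨g, h1, h2, h3⟩ := hg.2 (B + 1)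
    have hg1t : g 1 ∈ M.trans q (w n) := by
      have := h2 0 (by omega)
      rwa [Nat.add_zero, h1] at this
    have hg1m : g 1 ∈ β (n + 1) := h3 1 (by omega)
    have hPg1 : Path (n + 1) (g 1) B := by
      refine ⟨fun k => g (k + 1), rfl, fun k hk => ?_, fun k hk => ?_⟩
      · rw [show n + 1 + k = n + (k + 1) from by omega]
        exact h2 (k + 1) (by omega)
      · rw [show n + 1 + k = n + (k + 1) from by omega]
        exact h3 (k + 1) (by omega)
    obtain ⟨m0, hm0⟩ := hcon' (g 1) hg1t hg1m
    have hex : ∃ m, ¬ Path (n + 1) (g 1) m := ⟨m0, hm0⟩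
    have hb1 : bnd (g 1) = hex.choose := dif_pos hex
    have hb2 : bnd (g 1) ≤ B := Finset.le_sup (Finset.mem_univ (g 1))
    exact hex.choose_spec (hmono (n + 1) (g 1) B hex.choose (by omega) hPg1)
  have hgood0 : Good 0 M.init := by
    obtain ⟨q, hq⟩ := hgood 0
    have : q = M.init := by
      have := hq.1
      rw [hβ0] at this
      exact this
    rwa [this] at hq
  let G : ∀ n : ℕ, {q : Q // Good n q} := fun n =>
    Nat.rec ⟨M.init, hgood0⟩
      (fun n p => ⟨(hstep n p.1 p.2).choose, (hstep n p.1 p.2).choose_spec.2⟩) n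
  set ρ : ℕ → Q := fun n => (G n).1 with hρ
  have hrun : M.IsRun w ρ := by
    refine ⟨rfl, fun n => ?_⟩
    exact (hstep n (G n).1 (G n).2).choose_spec.1
  have hβρ : ∀ n, ρ n ∈ β n := fun n => (G n).2.1
  have hAcc : M.Accepting ρ := by
    by_contra hcon
    rw [NBW.Accepting] at hcon
    push_neg at hcon
    set bnd : Q → ℕ := fun q =>
      if h : ∃ N, ∀ i ≥ N, ρ i ≠ q then h.choose else 0 with hbnd
    set B := Finset.univ.sup bnd with hB
    obtain ⟨k, hk, hLk⟩ := hL B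
    have hacc1 : ρ (k + 1) ∈ M.acc := hLk.sub_F (hβρ (k + 1))
    obtain ⟨N0, hN0⟩ := hcon (ρ (k + 1)) hacc1
    have hex : ∃ N, ∀ i ≥ N, ρ i ≠ ρ (k + 1) := ⟨N0, hN0⟩
    have hb1 : bnd (ρ (k + 1)) = hex.choose := dif_pos hex
    have hb2 : bnd (ρ (k + 1)) ≤ B := Finset.le_sup (Finset.mem_univ _)
    exact hex.choose_spec (k + 1) (by omega) rfl
  exact ⟨ρ, hrun, hAcc⟩

lemma dir2 [Fintype Q]
    (H : ∀ i, ∃ j, i ≤ j ∧ ∃ S T : Set Q,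
      LeftChild M.trans M.acc (w j) (rstSlice M w j) S T ∧
      ∃ b : ℕ → Set Q, b 0 = T ∧
        ∀ m, Child M.trans M.acc (w (j + 1 + m)) (rstSlice M w (j + 1 + m))
          (b m) (b (m + 1))) :
    w ∈ M.Lang := by
  classical
  have HB : ∀ i, ∃ (j : ℕ) (β : ℕ → Set Q), i ≤ j ∧ IsBranch M w β ∧
      LeftChild M.trans M.acc (w j) (rstSlice M w j) (β j) (β (j + 1)) := by
    intro i
    obtain ⟨j, hij, S, T, hLC, b, hb0, hb⟩ := H i
    obtain ⟨β, hβ, hβj, hβj1⟩ := extend_back (Or.inl hLC) hb0 hb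
    exact ⟨j, β, hij, hβ, by rw [hβj, hβj1]; exact hLC⟩
  choose jj ββ hji hβ hLC using HB
  have hfin : Finite {β : ℕ → Set Q // IsBranch M w β} := branches_finite
  obtain ⟨y, hy⟩ := Finite.exists_infinite_fiber
    (fun i => (⟨ββ i, hβ i⟩ : {β : ℕ → Set Q // IsBranch M w β}))
  have hIinf : {i : ℕ | (⟨ββ i, hβ i⟩ : {β : ℕ → Set Q // IsBranch M w β}) = y}.Infinite := by
    rw [← Set.infinite_coe_iff]
    exact hy
  have hLrec : ∀ K, ∃ k ≥ K,
      LeftChild M.trans M.acc (w k) (rstSlice M w k) (y.1 k) (y.1 (k + 1)) := by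
    intro K
    obtain ⟨i, hiI, hiK⟩ := hIinf.exists_gt K
    have heq : ββ i = y.1 := congrArg Subtype.val hiI
    refine ⟨jj i, le_trans (le_of_lt hiK) (hji i), ?_⟩
    rw [← heq]
    exact hLC i
  exact branch_run y.2 hLrec

end Dir2Main
/-- A word is rejected by an NBW iff its reduced split tree has a cutoff: a
level `i` such that from every level `j ≥ i` on, every left (accepting) child
lies on a finite branch, i.e. admits no infinite branch extending it. -/
theorem stmt9 {A Q : Type*} [Fintype Q] (M : NBW A Q) (w : ℕ → A) :
    w ∉ M.Lang ↔
      ∃ i : ℕ, ∀ j ≥ i, ∀ S T : Set Q,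
        LeftChild M.trans M.acc (w j) (rstSlice M w j) S T →
        ¬ ∃ b : ℕ → Set Q, b 0 = T ∧
            ∀ m, Child M.trans M.acc (w (j + 1 + m)) (rstSlice M w (j + 1 + m))
              (b m) (b (m + 1)) := by
  constructor
  · intro hrej
    by_contra hcut
    push_neg at hcut
    refine hrej (dir2 ?_)
    intro i
    obtain ⟨j, hj, S, T, hLC, hb⟩ := hcut i
    exact ⟨j, hj, S, T, hLC, hb⟩
  · rintro ⟨i, hcut⟩ hW
    obtain ⟨j, hj, S, T, hLC, hb⟩ := dir1 hW i
    exact hcut j hj S T hLC hb
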